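/- If R is a finite ring whose only unit is 1, then R is semisimple. -/

import Mathlib

set_option linter.unusedSectionVars false

section aux
variable {R : Type*} [Ring R] [Fintype R] (h : ∀ u : Rˣ, u = 1)

include h in
lemma sq_zero_eq_zero {x : R} (hx : x * x = 0) : x = 0 := by
  have hu : ((1 : R) + x) * (1 - x) = 1 := by
    have : (1 + x) * (1 - x) = 1 - x * x + (x - x) := by noncomm_ring
    simp [hx, this]
  have hu' : ((1 : R) - x) * (1 + x) = 1 := by
    have : (1 - x) * (1 + x) = 1 - x * x + (x - x) := by noncomm_ring
    simp [hx, this]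
  have := h ⟨1 + x, 1 - x, hu, hu'⟩
  have : (1 : R) + x = 1 := congrArg Units.val this
  linear_combination (norm := abel) this

include h in
lemma nilpotent_eq_zero : ∀ (n : ℕ) (x : R), x ^ n = 0 → x = 0 := by
  intro n
  induction n using Nat.strong_induction_on with
  | _ n ih =>
    intro x hx
    match n with
    | 0 =>
      have h1 : (1 : R) = 0 := by simpa using hx
      rw [← mul_one x, h1, mul_zero]
    | 1 => simpa using hx
    | (m+2) =>
      have : (x ^ (m+1)) * (x ^ (m+1)) = 0 := by
        rw [← pow_add]
        have : m + 1 + (m + 1) = (m + 2) + m := by omega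
        rw [this, pow_add, hx, zero_mul]
      have h1 : x ^ (m+1) = 0 := sq_zero_eq_zero h this
      exact ih (m+1) (by omega) x h1

include h in
lemma exists_pow_eq (x : R) : ∃ M : ℕ, x ^ (M + 2) = x := by
  obtain ⟨a, b, hne, hab⟩ :=
    Finite.exists_ne_map_eq_of_infinite (fun n : ℕ => x ^ (n + 1))
  
  wlog hlt : a < b generalizing a b
  · exact this b a (Ne.symm hne) hab.symm (by omega)
  set d := b - a with hd
  have hd1 : 1 ≤ d := by omega
  have hper : ∀ m, a + 1 ≤ m → x ^ (m + d) = x ^ m := by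
    intro m hm
    have : x ^ (m + d) = x ^ (m - (a+1)) * x ^ (b + 1) := by
      rw [← pow_add]; congr 1; omega
    rw [this, ← hab, ← pow_add]
    congr 1; omega
  have hperk : ∀ k m, a + 1 ≤ m → x ^ (m + k * d) = x ^ m := by
    intro k
    induction k with
    | zero => simp
    | succ k ih =>
      intro m hm
      have : m + (k+1) * d = (m + k * d) + d := by ring
      rw [this, hper _ (by omega), ih m hm]
  set N := (a + 1) * d with hN
  have hN1 : 1 ≤ N := Nat.mul_pos (by omega) hd1
  have hNa : a + 1 ≤ N := Nat.le_mul_of_pos_right _ hd1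
  have hNper : ∀ m, a + 1 ≤ m → x ^ (m + N) = x ^ m := by
    intro m hm
    rw [hN]
    exact hperk (a+1) m hm
  set y := x - x ^ (N + 1) with hy
  have key : ∀ k, 1 ≤ k → y ^ k = x ^ k - x ^ (k + N) := by
    intro k
    induction k with
    | zero => omega
    | succ k ih =>
      intro _
      match k, ih with
      | 0, _ =>
        rw [pow_one, pow_one, hy]
        congr 2
        omega
      | (k+1), ih =>
        rw [pow_succ, ih (by omega), hy]
        have hc : x ^ (k + 1 + N) * x ^ (N + 1) = x ^ (k + 1 + 1 + N) := by
          rw [← pow_add]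
          have e1 : k + 1 + N + (N + 1) = (k + 1 + 1 + N) + N := by omega
          rw [e1, hNper _ (by omega)]
        calc (x ^ (k+1) - x ^ (k + 1 + N)) * (x - x ^ (N+1))
            = x ^ (k+1) * x - x ^ (k+1) * x ^ (N+1) - x ^ (k+1+N) * x
              + x ^ (k+1+N) * x ^ (N+1) := by noncomm_ring
          _ = x ^ (k+1+1) - x ^ (k+1+1+N) := by
              rw [hc, ← pow_succ, ← pow_succ, ← pow_add]
              have e4 : k + 1 + (N + 1) = k + 1 + 1 + N := by omega
              rw [e4]
              abel
  have hyN : y ^ (N + N) = 0 := by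
    rw [key (N+N) (by omega)]
    rw [show N + N + N = (N + N) + N from rfl, hNper (N+N) (by omega), sub_self]
  have hy0 : y = 0 := nilpotent_eq_zero h (N + N) y hyN
  have hsub : x - x ^ (N + 1) = 0 := by rw [← hy]; exact hy0
  have hx : x = x ^ (N + 1) := sub_eq_zero.mp hsub
  refine ⟨N - 1, ?_⟩
  have e : N - 1 + 2 = N + 1 := by omega
  rw [e]
  exact hx.symm

include h in
lemma mul_self_eq (x : R) : x * x = x := by
  obtain ⟨M, hx⟩ := exists_pow_eq h x
  have hper : ∀ m, 1 ≤ m → x ^ (m + (M + 1)) = x ^ m := by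
    intro m hm
    have : x ^ (m + (M+1)) = x ^ (m - 1) * x ^ (M + 2) := by
      rw [← pow_add]; congr 1; omega
    rw [this, hx, ← pow_succ]
    congr 1; omega
  have h1 : x ^ (2*M + 2) = x ^ (M + 1) := by
    have := hper (M+1) (by omega); rw [show M + 1 + (M+1) = 2*M+2 by omega] at this
    exact this
  have h2 : x ^ (3*M + 2) = x ^ (2*M + 1) := by
    have := hper (2*M+1) (by omega); rw [show 2*M + 1 + (M+1) = 3*M+2 by omega] at this
    exact this
  have h3 : x ^ (M + 2) = x := hx
  have p1 : x ^ (M+1) * x ^ (2*M+1) = x ^ (2*M+1) := by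
    rw [← pow_add, show M+1+(2*M+1) = 3*M+2 by omega, h2]
  have p2 : x ^ (2*M+1) * x ^ (M+1) = x ^ (2*M+1) := by
    rw [← pow_add, show 2*M+1+(M+1) = 3*M+2 by omega, h2]
  have p3 : x * x ^ (2*M+1) = x ^ (M+1) := by
    rw [← pow_succ', show (2*M+1)+1 = 2*M+2 by omega, h1]
  have p4 : x ^ (2*M+1) * x = x ^ (M+1) := by
    rw [← pow_succ, show (2*M+1)+1 = 2*M+2 by omega, h1]
  have p5 : x * x ^ (M+1) = x := by rw [← pow_succ', show (M+1)+1 = M+2 by omega, h3]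
  have p6 : x ^ (M+1) * x = x := by rw [← pow_succ, show (M+1)+1 = M+2 by omega, h3]
  have p7 : x ^ (M+1) * x ^ (M+1) = x ^ (M+1) := by
    rw [← pow_add, show (M+1)+(M+1) = 2*M+2 by omega, h1]
  set u : R := 1 - x ^ (M+1) + x with hu
  set v : R := 1 - x ^ (M+1) + x ^ (2*M+1) with hv
  have huv : u * v = 1 := by
    rw [hu, hv]
    calc (1 - x ^ (M+1) + x) * (1 - x ^ (M+1) + x ^ (2*M+1))
        = 1 - x^(M+1) + x^(2*M+1) - x^(M+1) + x^(M+1)*x^(M+1) - x^(M+1)*x^(2*M+1)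
          + x - x*x^(M+1) + x*x^(2*M+1) := by noncomm_ring
      _ = 1 := by rw [p1, p3, p5, p7]; abel
  have hvu : v * u = 1 := by
    rw [hu, hv]
    calc (1 - x ^ (M+1) + x ^ (2*M+1)) * (1 - x ^ (M+1) + x)
        = 1 - x^(M+1) + x - x^(M+1) + x^(M+1)*x^(M+1) - x^(M+1)*x
          + x^(2*M+1) - x^(2*M+1)*x^(M+1) + x^(2*M+1)*x := by noncomm_ring
      _ = 1 := by rw [p2, p4, p6, p7]; abel
  have heq := congrArg Units.val (h ⟨u, v, huv, hvu⟩)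
  have h' : (1 : R) - x ^ (M+1) + x = 1 := heq
  have hxe : x = x ^ (M+1) := by linear_combination (norm := abel) h'
  calc x * x = x * x ^ (M+1) := by rw [← hxe]
    _ = x := p5

end aux

/-- A finite ring whose only unit is `1` is semisimple. -/
theorem semisimple_of_units_trivial {R : Type*} [Ring R] [Fintype R]
    (h : ∀ u : Rˣ, u = 1) :
    IsSemisimpleRing R := by
  letI bR : BooleanRing R := { ‹Ring R› with isIdempotentElem := mul_self_eq h }
  letI cR : CommRing R := BooleanRing.toCommRing
  haveI : IsReduced R := by
    constructor
    intro x ⟨n, hn⟩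
    exact nilpotent_eq_zero h n x hn
  exact IsArtinianRing.isSemisimpleRing_of_isReduced R
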